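/- In the static two-region model, the utilitarian differentiated carbon prices τ_i = -(1/u'_i)(u'_N D'_N + u'_S D'_S) equalize the marginal welfare cost of abatement across regions: u'_N C'_N(A_N) = u'_S C'_S(A_S) = -(u'_N D'_N + u'_S D'_S). Consequently, since u'_S > u'_N > 0, the richer region's carbon price is strictly higher: τ_N > τ_S. -/

import Mathlib

/-- The utilitarian differentiated carbon prices
`τ_i = -(1/u'_i)(u'_N D'_N + u'_S D'_S)` equalize marginal welfare costs of
abatement across regions, each equal to the sum of marginal welfare benefits;
consequently, since `u'_S > u'_N > 0`, the richer region's carbon price is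
strictly higher: `τ_N > τ_S`. -/
theorem utilitarian_differentiated_prices
    (uN uS D'N D'S τN τS : ℝ)
    (huN : 0 < uN) (huNS : uN < uS)
    (hDN : D'N < 0) (hDS : D'S < 0)
    (hτN : τN = -(1 / uN) * (uN * D'N + uS * D'S))
    (hτS : τS = -(1 / uS) * (uN * D'N + uS * D'S)) :
    uN * τN = -(uN * D'N + uS * D'S) ∧
      uS * τS = -(uN * D'N + uS * D'S) ∧
      τS < τN := by
  have huS : 0 < uS := huN.trans huNS
  have hS : uN * D'N + uS * D'S < 0 := by nlinarith
  refine ⟨by rw [hτN]; field_simp [huN.ne'], by rw [hτS]; field_simp [huS.ne'], ?_⟩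
  rw [hτN, hτS]
  have h1 : (0:ℝ) < 1/uN := by positivity
  have h2 : (0:ℝ) < 1/uS := by positivity
  have h3 : 1/uS < 1/uN := one_div_lt_one_div_of_lt huN huNS
  nlinarith
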